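/- The fundamental solution φ_{m,z,w} is differentiable on ℝ³∖{0} and satisfies the free Dirac equation there: for every x ∈ ℝ³ with x ≠ 0, −i( α₁ ∂₁φ_{m,z,w}(x) + α₂ ∂₂φ_{m,z,w}(x) + α₃ ∂₃φ_{m,z,w}(x) ) + m β φ_{m,z,w}(x) − z φ_{m,z,w}(x) = 0, where ∂_j denotes the partial derivative in the j-th coordinate direction. -/

import Mathlib

open Matrix Complex

noncomputable section

/-- Pauli matrix σ₁. -/
def sigma1 : Matrix (Fin 2) (Fin 2) ℂ := !![0, 1; 1, 0]

/-- Pauli matrix σ₂. -/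
def sigma2 : Matrix (Fin 2) (Fin 2) ℂ := !![0, -Complex.I; Complex.I, 0]

/-- Pauli matrix σ₃. -/
def sigma3 : Matrix (Fin 2) (Fin 2) ℂ := !![1, 0; 0, -1]

/-- The Dirac matrices α₁, α₂, α₃ in 2×2-block form `[[0, σⱼ],[σⱼ, 0]]`. -/
def diracAlpha : Fin 3 → Matrix (Fin 4) (Fin 4) ℂ :=
  ![Matrix.reindex finSumFinEquiv finSumFinEquiv (Matrix.fromBlocks 0 sigma1 sigma1 0),
    Matrix.reindex finSumFinEquiv finSumFinEquiv (Matrix.fromBlocks 0 sigma2 sigma2 0),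
    Matrix.reindex finSumFinEquiv finSumFinEquiv (Matrix.fromBlocks 0 sigma3 sigma3 0)]

/-- The Dirac matrix β = `[[I₂, 0],[0, −I₂]]`. -/
def diracBeta : Matrix (Fin 4) (Fin 4) ℂ :=
  Matrix.reindex finSumFinEquiv finSumFinEquiv
    (Matrix.fromBlocks (1 : Matrix (Fin 2) (Fin 2) ℂ) 0 0 (-1 : Matrix (Fin 2) (Fin 2) ℂ))

/-- α·x = x₁α₁ + x₂α₂ + x₃α₃. -/
def alphaDot (x : Fin 3 → ℝ) : Matrix (Fin 4) (Fin 4) ℂ :=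
  (x 0 : ℂ) • diracAlpha 0 + (x 1 : ℂ) • diracAlpha 1 + (x 2 : ℂ) • diracAlpha 2

/-- Euclidean inner product on ℝ³. -/
def inner3 (X Y : Fin 3 → ℝ) : ℝ := X 0 * Y 0 + X 1 * Y 1 + X 2 * Y 2

/-- Euclidean norm on ℝ³. -/
def norm3 (X : Fin 3 → ℝ) : ℝ := Real.sqrt (inner3 X X)

/-- Cross product on ℝ³. -/
def cross3 (X Y : Fin 3 → ℝ) : Fin 3 → ℝ :=
  ![X 1 * Y 2 - X 2 * Y 1, X 2 * Y 0 - X 0 * Y 2, X 0 * Y 1 - X 1 * Y 0]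

/-- γ₅ := −i α₁α₂α₃. -/
def gamma5 : Matrix (Fin 4) (Fin 4) ℂ :=
  (-Complex.I) • (diracAlpha 0 * diracAlpha 1 * diracAlpha 2)

/-- S·X := −γ₅ (α·X). -/
def sDot (X : Fin 3 → ℝ) : Matrix (Fin 4) (Fin 4) ℂ := -(gamma5 * alphaDot X)

/-- P₊ := (I₄ − iβ(α·ν))/2. -/
def Pplus (ν : Fin 3 → ℝ) : Matrix (Fin 4) (Fin 4) ℂ :=
  ((1 : ℂ) / 2) • (1 - Complex.I • (diracBeta * alphaDot ν))

/-- P₋ := (I₄ + iβ(α·ν))/2. -/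
def Pminus (ν : Fin 3 → ℝ) : Matrix (Fin 4) (Fin 4) ℂ :=
  ((1 : ℂ) / 2) • (1 + Complex.I • (diracBeta * alphaDot ν))

/-- λ := √(|ν × ξ|² + 1). -/
def lam (ν ξ : Fin 3 → ℝ) : ℝ :=
  Real.sqrt (inner3 (cross3 ν ξ) (cross3 ν ξ) + 1)

/-- Π₊ := (1/2)(I₄ + λ⁻¹(S·τ − iβ(α·ν))), τ = ν × ξ. -/
def Piplus (ν ξ : Fin 3 → ℝ) : Matrix (Fin 4) (Fin 4) ℂ :=
  ((1 : ℂ) / 2) •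
    (1 + ((lam ν ξ : ℂ))⁻¹ • (sDot (cross3 ν ξ) - Complex.I • (diracBeta * alphaDot ν)))

/-- Π₋ := (1/2)(I₄ − λ⁻¹(S·τ − iβ(α·ν))), τ = ν × ξ. -/
def Piminus (ν ξ : Fin 3 → ℝ) : Matrix (Fin 4) (Fin 4) ℂ :=
  ((1 : ℂ) / 2) •
    (1 - ((lam ν ξ : ℂ))⁻¹ • (sDot (cross3 ν ξ) - Complex.I • (diracBeta * alphaDot ν)))

/-- ρ₊ := (i⟨ν,ξ⟩ + λ)/s. -/
def rhoP (ν ξ : Fin 3 → ℝ) (s : ℝ) : ℂ :=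
  (Complex.I * (inner3 ν ξ : ℂ) + (lam ν ξ : ℂ)) / (s : ℂ)

/-- ρ₋ := (i⟨ν,ξ⟩ − λ)/s. -/
def rhoM (ν ξ : Fin 3 → ℝ) (s : ℝ) : ℂ :=
  (Complex.I * (inner3 ν ξ : ℂ) - (lam ν ξ : ℂ)) / (s : ℂ)

/-- L₀ := s⁻¹ (iα·ν)(α·ξ + β). -/
def L0 (ν ξ : Fin 3 → ℝ) (s : ℝ) : Matrix (Fin 4) (Fin 4) ℂ :=
  ((s : ℂ))⁻¹ • ((Complex.I • alphaDot ν) * (alphaDot ξ + diracBeta))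

/-- k₊ := (1 + λ⁻¹)/2. -/
def kPlus (ν ξ : Fin 3 → ℝ) : ℝ := (1 + (lam ν ξ)⁻¹) / 2

/-- k₋ := (1 − λ⁻¹)/2. -/
def kMinus (ν ξ : Fin 3 → ℝ) : ℝ := (1 - (lam ν ξ)⁻¹) / 2

/-- Θ := (2λ)⁻¹ S·τ, τ = ν × ξ. -/
def theta (ν ξ : Fin 3 → ℝ) : Matrix (Fin 4) (Fin 4) ℂ :=
  ((2 * lam ν ξ : ℝ) : ℂ)⁻¹ • sDot (cross3 ν ξ)

/-- The fundamental solution φ_{m,z,w} of the free Dirac operator. -/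
def phiFS (m : ℝ) (z w : ℂ) (x : Fin 3 → ℝ) : Matrix (Fin 4) (Fin 4) ℂ :=
  (Complex.exp (Complex.I * w * (norm3 x : ℂ)) / (4 * (Real.pi : ℂ) * (norm3 x : ℂ))) •
    (z • (1 : Matrix (Fin 4) (Fin 4) ℂ) + (m : ℂ) • diracBeta +
      ((1 - Complex.I * w * (norm3 x : ℂ)) * Complex.I / ((norm3 x : ℂ) ^ 2)) • alphaDot x)

attribute [local instance] Matrix.normedAddCommGroup Matrix.normedSpace


-- explicit matrix forms
lemma alpha0_eq : diracAlpha 0 = !![0,0,0,1; 0,0,1,0; 0,1,0,0; 1,0,0,0] := by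
  ext i j; fin_cases i <;> fin_cases j <;> rfl
lemma alpha1_eq : diracAlpha 1 = !![0,0,0,-Complex.I; 0,0,Complex.I,0; 0,-Complex.I,0,0; Complex.I,0,0,0] := by
  ext i j; fin_cases i <;> fin_cases j <;> rfl
lemma alpha2_eq : diracAlpha 2 = !![0,0,1,0; 0,0,0,-1; 1,0,0,0; 0,-1,0,0] := by
  ext i j; fin_cases i <;> fin_cases j <;> rfl
lemma beta_eq : diracBeta = !![1,0,0,0; 0,1,0,0; 0,0,-1,0; 0,0,0,-1] := by
  ext i j; fin_cases i <;> fin_cases j <;>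
    first
    | rfl
    | simp +decide [diracBeta, Matrix.fromBlocks, finSumFinEquiv, Matrix.reindex_apply, Fin.addCases,
        Matrix.one_apply, Matrix.neg_apply, Matrix.vecHead, Matrix.vecTail]

-- product relations
lemma aa0 : diracAlpha 0 * diracAlpha 0 = 1 := by
  rw [alpha0_eq]; ext i j; fin_cases i <;> fin_cases j <;>
    simp [Matrix.mul_apply, Fin.sum_univ_four, Matrix.one_apply, Matrix.vecHead, Matrix.vecTail]
lemma aa1 : diracAlpha 1 * diracAlpha 1 = 1 := by
  rw [alpha1_eq]; ext i j; fin_cases i <;> fin_cases j <;>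
    simp [Matrix.mul_apply, Fin.sum_univ_four, Matrix.one_apply, Matrix.vecHead, Matrix.vecTail]
lemma aa2 : diracAlpha 2 * diracAlpha 2 = 1 := by
  rw [alpha2_eq]; ext i j; fin_cases i <;> fin_cases j <;>
    simp [Matrix.mul_apply, Fin.sum_univ_four, Matrix.one_apply, Matrix.vecHead, Matrix.vecTail]
lemma bb : diracBeta * diracBeta = 1 := by
  rw [beta_eq]; ext i j; fin_cases i <;> fin_cases j <;>
    simp [Matrix.mul_apply, Fin.sum_univ_four, Matrix.one_apply, Matrix.vecHead, Matrix.vecTail]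
lemma ab0 : diracAlpha 0 * diracBeta = -(diracBeta * diracAlpha 0) := by
  rw [alpha0_eq, beta_eq]; ext i j; fin_cases i <;> fin_cases j <;>
    simp [Matrix.mul_apply, Fin.sum_univ_four, Matrix.vecHead, Matrix.vecTail]
lemma ab1 : diracAlpha 1 * diracBeta = -(diracBeta * diracAlpha 1) := by
  rw [alpha1_eq, beta_eq]; ext i j; fin_cases i <;> fin_cases j <;>
    simp [Matrix.mul_apply, Fin.sum_univ_four, Matrix.vecHead, Matrix.vecTail]
lemma ab2 : diracAlpha 2 * diracBeta = -(diracBeta * diracAlpha 2) := by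
  rw [alpha2_eq, beta_eq]; ext i j; fin_cases i <;> fin_cases j <;>
    simp [Matrix.mul_apply, Fin.sum_univ_four, Matrix.vecHead, Matrix.vecTail]
lemma a10 : diracAlpha 1 * diracAlpha 0 = -(diracAlpha 0 * diracAlpha 1) := by
  rw [alpha0_eq, alpha1_eq]; ext i j; fin_cases i <;> fin_cases j <;>
    simp [Matrix.mul_apply, Fin.sum_univ_four, Matrix.vecHead, Matrix.vecTail]
lemma a20 : diracAlpha 2 * diracAlpha 0 = -(diracAlpha 0 * diracAlpha 2) := by
  rw [alpha0_eq, alpha2_eq]; ext i j; fin_cases i <;> fin_cases j <;>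
    simp [Matrix.mul_apply, Fin.sum_univ_four, Matrix.vecHead, Matrix.vecTail]
lemma a21 : diracAlpha 2 * diracAlpha 1 = -(diracAlpha 1 * diracAlpha 2) := by
  rw [alpha1_eq, alpha2_eq]; ext i j; fin_cases i <;> fin_cases j <;>
    simp [Matrix.mul_apply, Fin.sum_univ_four, Matrix.vecHead, Matrix.vecTail]

-- scalar coefficient functions
def Uc (w : ℂ) (t : ℝ) : ℂ := Complex.exp (Complex.I * w * t) / (4 * (Real.pi:ℂ) * t)
def Pc (w : ℂ) (t : ℝ) : ℂ :=
  Complex.exp (Complex.I * w * t) * (Complex.I * w * t - 1) / (4 * (Real.pi:ℂ) * t^3)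
def Vc (w : ℂ) (t : ℝ) : ℂ :=
  Complex.exp (Complex.I * w * t) * ((1 - Complex.I * w * t) * Complex.I) / (4 * (Real.pi:ℂ) * t^3)
def Qc (w : ℂ) (t : ℝ) : ℂ :=
  Complex.I * Complex.exp (Complex.I * w * t) * (w^2*t^2 - 3*(1 - Complex.I*w*t)) /
    (4 * (Real.pi:ℂ) * t^5)

def Amat (m : ℝ) (z : ℂ) : Matrix (Fin 4) (Fin 4) ℂ :=
  z • (1 : Matrix (Fin 4) (Fin 4) ℂ) + (m:ℂ) • diracBeta

def pdphi (m : ℝ) (z w : ℂ) (x : Fin 3 → ℝ) (j : Fin 3) : Matrix (Fin 4) (Fin 4) ℂ :=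
  ((x j : ℂ) * Pc w (norm3 x)) • Amat m z + ((x j : ℂ) * Qc w (norm3 x)) • alphaDot x
    + Vc w (norm3 x) • diracAlpha j

def proj3 (j : Fin 3) : (Fin 3 → ℝ) →L[ℝ] ℝ := ContinuousLinearMap.proj j

def Dphi (m : ℝ) (z w : ℂ) (x : Fin 3 → ℝ) : (Fin 3 → ℝ) →L[ℝ] Matrix (Fin 4) (Fin 4) ℂ :=
  (proj3 0).smulRight (pdphi m z w x 0)
  + (proj3 1).smulRight (pdphi m z w x 1)
  + (proj3 2).smulRight (pdphi m z w x 2)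

def alphaL : (Fin 3 → ℝ) →L[ℝ] Matrix (Fin 4) (Fin 4) ℂ :=
  (proj3 0).smulRight (diracAlpha 0) + (proj3 1).smulRight (diracAlpha 1)
  + (proj3 2).smulRight (diracAlpha 2)

lemma inner3_self_nonneg (x : Fin 3 → ℝ) : 0 ≤ inner3 x x := by
  unfold inner3; nlinarith [mul_self_nonneg (x 0), mul_self_nonneg (x 1), mul_self_nonneg (x 2)]

lemma inner3_self_pos {x : Fin 3 → ℝ} (hx : x ≠ 0) : 0 < inner3 x x := by
  rcases (inner3_self_nonneg x).lt_or_eq with h | h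
  · exact h
  · exfalso; apply hx; funext j
    have h' : x 0 * x 0 + x 1 * x 1 + x 2 * x 2 = 0 := by unfold inner3 at h; linarith
    have h0 : x 0 = 0 := by
      nlinarith [mul_self_nonneg (x 0), mul_self_nonneg (x 1), mul_self_nonneg (x 2)]
    have h1 : x 1 = 0 := by
      nlinarith [mul_self_nonneg (x 0), mul_self_nonneg (x 1), mul_self_nonneg (x 2)]
    have h2 : x 2 = 0 := by
      nlinarith [mul_self_nonneg (x 0), mul_self_nonneg (x 1), mul_self_nonneg (x 2)]
    fin_cases j
    · exact h0
    · exact h1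
    · exact h2
lemma norm3_pos {x : Fin 3 → ℝ} (hx : x ≠ 0) : 0 < norm3 x :=
  Real.sqrt_pos.2 (inner3_self_pos hx)

lemma norm3_sq (x : Fin 3 → ℝ) : (norm3 x)^2 = inner3 x x :=
  Real.sq_sqrt (inner3_self_nonneg x)

lemma phiFS_decomp (m : ℝ) (z w : ℂ) (x : Fin 3 → ℝ) (hx : x ≠ 0) :
    phiFS m z w x = Uc w (norm3 x) • Amat m z + Vc w (norm3 x) • alphaDot x := by
  have ht : (norm3 x : ℂ) ≠ 0 := by exact_mod_cast (norm3_pos hx).ne'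
  have hpi : (Real.pi:ℂ) ≠ 0 := Complex.ofReal_ne_zero.2 Real.pi_ne_zero
  have hc : Complex.exp (Complex.I * w * (norm3 x:ℂ)) / (4*(Real.pi:ℂ)*(norm3 x:ℂ)) *
      ((1 - Complex.I*w*(norm3 x:ℂ)) * Complex.I / ((norm3 x:ℂ))^2) = Vc w (norm3 x) := by
    unfold Vc; field_simp
  unfold phiFS
  rw [smul_add, smul_smul, hc]
  rfl

lemma hasDerivAt_ofReal (t : ℝ) : HasDerivAt (fun s : ℝ => (s:ℂ)) 1 t := by
  exact Complex.ofRealCLM.hasDerivAt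

lemma hasDerivAt_Uc (w : ℂ) {t : ℝ} (ht : t ≠ 0) : HasDerivAt (Uc w) (t * Pc w t) t := by
  have h0 := hasDerivAt_ofReal t
  have h1 := h0.const_mul (Complex.I * w)
  have h2 := h1.cexp
  have h3 := h0.const_mul (4*(Real.pi:ℂ))
  have htC : (t:ℂ) ≠ 0 := Complex.ofReal_ne_zero.2 ht
  have hpi : (Real.pi:ℂ) ≠ 0 := Complex.ofReal_ne_zero.2 Real.pi_ne_zero
  have hden : 4 * (Real.pi:ℂ) * (t:ℂ) ≠ 0 := by
    simp [hpi, htC]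
  have h4 := h2.div h3 hden
  refine h4.congr_deriv (Eq.symm ?_)
  unfold Pc
  field_simp

lemma hasDerivAt_Vc (w : ℂ) {t : ℝ} (ht : t ≠ 0) : HasDerivAt (Vc w) (t * Qc w t) t := by
  have h0 := hasDerivAt_ofReal t
  have h1 := h0.const_mul (Complex.I * w)
  have h2 := h1.cexp
  have h5 := (h1.const_sub 1).mul_const Complex.I
  have hnum := h2.mul h5
  have hp3 : HasDerivAt (fun s : ℝ => ((s:ℂ))^3) ((3:ℂ) * (t:ℂ)^(3-1)) t :=
    (hasDerivAt_pow 3 ((t:ℝ):ℂ)).comp_ofReal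
  have h6 := hp3.const_mul (4*(Real.pi:ℂ))
  have htC : (t:ℂ) ≠ 0 := Complex.ofReal_ne_zero.2 ht
  have hpi : (Real.pi:ℂ) ≠ 0 := Complex.ofReal_ne_zero.2 Real.pi_ne_zero
  have hden : 4 * (Real.pi:ℂ) * (t:ℂ)^3 ≠ 0 := by
    simp [hpi, htC]
  have h4 := hnum.div h6 hden
  refine h4.congr_deriv (Eq.symm ?_)
  simp only [Pi.mul_apply]
  unfold Qc
  field_simp
  ring_nf
  simp only [Complex.I_sq, Complex.I_pow_three]
  ring_nf

lemma Vc_eq (w : ℂ) (t : ℝ) : Vc w t = -Complex.I * Pc w t := by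
  unfold Vc Pc; ring

lemma key_scalar (m : ℝ) (z w : ℂ) (hw : w ^ 2 = z ^ 2 - (m : ℂ) ^ 2) {t : ℝ} (ht : t ≠ 0) :
    Complex.I * Qc w t * (t:ℂ)^2 + 3 * Pc w t = ((m:ℂ)^2 - z^2) * Uc w t := by
  unfold Qc Pc Uc
  have htC : (t:ℂ) ≠ 0 := Complex.ofReal_ne_zero.2 ht
  have hpi : (Real.pi:ℂ) ≠ 0 := Complex.ofReal_ne_zero.2 Real.pi_ne_zero
  field_simp
  linear_combination (-(t:ℂ)^2) * hw +
    (w^2*(t:ℂ)^2 - 3 + 3*Complex.I*w*t) * Complex.I_sq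

lemma alphaDot_eq_L : alphaDot = ⇑alphaL := by
  funext y
  show alphaDot y = alphaL y
  unfold alphaDot alphaL proj3
  simp only [ContinuousLinearMap.add_apply, ContinuousLinearMap.smulRight_apply,
    ContinuousLinearMap.proj_apply]
  match_scalars <;> simp [Complex.coe_algebraMap]

lemma hasFDerivAt_phiFS (m : ℝ) (z w : ℂ) (x : Fin 3 → ℝ) (hx : x ≠ 0) :
    HasFDerivAt (phiFS m z w) (Dphi m z w x) x := by
  have hq0 : inner3 x x ≠ 0 := (inner3_self_pos hx).ne'
  have ht0 : norm3 x ≠ 0 := (norm3_pos hx).ne'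
  have p0 := (proj3 0).hasFDerivAt (x := x)
  have p1 := (proj3 1).hasFDerivAt (x := x)
  have p2 := (proj3 2).hasFDerivAt (x := x)
  have h0 : HasFDerivAt (fun y : Fin 3 → ℝ => inner3 y y)
      ((x 0 • proj3 0 + x 0 • proj3 0) + (x 1 • proj3 1 + x 1 • proj3 1)
        + (x 2 • proj3 2 + x 2 • proj3 2)) x := ((p0.mul p0).add (p1.mul p1)).add (p2.mul p2)
  have hsq := Real.hasDerivAt_sqrt hq0
  have hN : HasFDerivAt norm3 ((1 / (2 * Real.sqrt (inner3 x x))) •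
      ((x 0 • proj3 0 + x 0 • proj3 0) + (x 1 • proj3 1 + x 1 • proj3 1)
        + (x 2 • proj3 2 + x 2 • proj3 2))) x :=
    HasDerivAt.comp_hasFDerivAt (h₂ := Real.sqrt) (f := fun y : Fin 3 → ℝ => inner3 y y) x hsq h0
  have hU := ((hasDerivAt_Uc w ht0).hasFDerivAt).comp x hN
  have hV := ((hasDerivAt_Vc w ht0).hasFDerivAt).comp x hN
  have hA : HasFDerivAt alphaDot alphaL x := by
    rw [alphaDot_eq_L]; exact alphaL.hasFDerivAt
  have hsum := (hU.smul_const (Amat m z)).add (hV.smul hA)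
  have hopen : IsOpen {y : Fin 3 → ℝ | y ≠ 0} := isOpen_compl_singleton
  have heq : phiFS m z w =ᶠ[nhds x]
      fun y => Uc w (norm3 y) • Amat m z + Vc w (norm3 y) • alphaDot y := by
    filter_upwards [hopen.mem_nhds hx] with y hy
    exact phiFS_decomp m z w y hy
  have hfinal := hsum.congr_of_eventuallyEq heq
  refine hfinal.congr_fderiv (Eq.symm ?_)
  refine ContinuousLinearMap.ext fun v => ?_
  show _ = (((1 / (2 * Real.sqrt (inner3 x x))) • ((x 0 • v 0 + x 0 • v 0) + (x 1 • v 1 + x 1 • v 1)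
      + (x 2 • v 2 + x 2 • v 2))) • ((norm3 x : ℂ) * Pc w (norm3 x))) • Amat m z
    + (Vc w (norm3 x) • alphaL v + (((1 / (2 * Real.sqrt (inner3 x x))) • ((x 0 • v 0 + x 0 • v 0)
      + (x 1 • v 1 + x 1 • v 1) + (x 2 • v 2 + x 2 • v 2))) • ((norm3 x : ℂ) * Qc w (norm3 x))) • alphaDot x)
  have hs : Real.sqrt (inner3 x x) = norm3 x := rfl
  unfold Dphi pdphi
  simp only [ContinuousLinearMap.add_apply, ContinuousLinearMap.smulRight_apply,
    ContinuousLinearMap.smul_apply, ContinuousLinearMap.coe_smul', Pi.smul_apply,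
    ContinuousLinearMap.proj_apply, proj3, alphaDot_eq_L, alphaL,
    ContinuousLinearMap.coe_comp', Function.comp_apply]
  rw [hs]
  have htC : ((norm3 x : ℝ) : ℂ) ≠ 0 := Complex.ofReal_ne_zero.2 ht0
  match_scalars <;> (push_cast [Complex.coe_algebraMap, Complex.real_smul, smul_eq_mul]; field_simp [htC]; try ring)

lemma Dphi_single (m : ℝ) (z w : ℂ) (x : Fin 3 → ℝ) (j : Fin 3) :
    Dphi m z w x (Pi.single j 1) = pdphi m z w x j := by
  fin_cases j <;>
    simp [Dphi, proj3, Pi.single_apply]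


-- STATEMENT 17
theorem stmt17 (m : ℝ) (hm : 0 < m) (z w : ℂ) (hw : w ^ 2 = z ^ 2 - (m : ℂ) ^ 2) :
    DifferentiableOn ℝ (phiFS m z w) {x : Fin 3 → ℝ | x ≠ 0} ∧
    ∀ x : Fin 3 → ℝ, x ≠ 0 →
      (-Complex.I) • (diracAlpha 0 * fderiv ℝ (phiFS m z w) x (Pi.single 0 1)
          + diracAlpha 1 * fderiv ℝ (phiFS m z w) x (Pi.single 1 1)
          + diracAlpha 2 * fderiv ℝ (phiFS m z w) x (Pi.single 2 1))
        + (m : ℂ) • (diracBeta * phiFS m z w x) - z • phiFS m z w x = 0 := by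
  constructor
  · intro x hx
    exact (hasFDerivAt_phiFS m z w x hx).differentiableAt.differentiableWithinAt
  · intro x hx
    have hD := hasFDerivAt_phiFS m z w x hx
    have ht0 : norm3 x ≠ 0 := (norm3_pos hx).ne'
    have hkey := key_scalar m z w hw ht0
    have ht2 : ((x 0 : ℂ))^2 + ((x 1 : ℂ))^2 + ((x 2 : ℂ))^2 = ((norm3 x : ℝ) : ℂ)^2 := by
      have h : (x 0)^2 + (x 1)^2 + (x 2)^2 = (norm3 x)^2 := by
        rw [norm3_sq x]; unfold inner3; ring
      exact_mod_cast congrArg (fun r : ℝ => (r:ℂ)) h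
    rw [hD.fderiv, Dphi_single, Dphi_single, Dphi_single, phiFS_decomp m z w x hx]
    unfold pdphi
    rw [Vc_eq]
    unfold Amat alphaDot
    simp only [mul_add, Matrix.mul_smul, smul_add, smul_smul, mul_one, Matrix.mul_one,
      aa0, aa1, aa2, bb, ab0, ab1, ab2, a10, a20, a21, mul_neg, smul_neg, neg_smul]
    match_scalars <;>
      first
        | ring1
        | linear_combination (-Complex.I * Qc w (norm3 x)) * ht2 - hkey
        | linear_combination (3 * Pc w (norm3 x)) * Complex.I_sq
        | linear_combination (-Complex.I * Qc w (norm3 x)) * ht2 - hkey +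
            (3 * Pc w (norm3 x)) * Complex.I_sq

end
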